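/- Let σ = 127/50 (i.e., σ = 2.54). Then Φ((1/10 − 5)/σ) > 651 · Φ(−10/σ), where Φ is the standard normal CDF. (That is, with threshold 5 for observed items and threshold 10 for unobserved items, histogram value 1/10 for the observed case and 0 for the unobserved case, the ratio of release probabilities exceeds 651.) -/

import Mathlib

open MeasureTheory ProbabilityTheory

/-- The standard normal cumulative distribution function. -/
noncomputable def stdNormalCDF (x : ℝ) : ℝ :=
  ((gaussianReal 0 1) (Set.Iic x)).toReal

private lemma exp_neg_taylor (u : ℝ) (hu : 0 ≤ u) (N : ℕ) (h : 2 * u ≤ N + 1) :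
    |Real.exp (-u) - ∑ m ∈ Finset.range N, (-u) ^ m / m.factorial| ≤ 2 * u ^ N / N.factorial := by
  have habs : ‖(-(u : ℂ))‖ = u := by
    rw [norm_neg, Complex.norm_real, Real.norm_eq_abs, abs_of_nonneg hu]
  have h' : ‖(-(u : ℂ))‖ / (N.succ : ℕ) ≤ 1 / 2 := by
    rw [habs]
    rw [div_le_div_iff₀ (by positivity) (by norm_num)]
    push_cast
    linarith
  have key := Complex.exp_bound' h'
  have hcast : Complex.exp (-(u : ℂ)) - ∑ m ∈ Finset.range N, (-(u : ℂ)) ^ m / m.factorial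
      = ((Real.exp (-u) - ∑ m ∈ Finset.range N, (-u) ^ m / m.factorial : ℝ) : ℂ) := by
    push_cast [← Complex.ofReal_exp]
    norm_num
  rw [hcast, Complex.norm_real, Real.norm_eq_abs, habs] at key
  calc |Real.exp (-u) - ∑ m ∈ Finset.range N, (-u) ^ m / m.factorial|
      ≤ u ^ N / N.factorial * 2 := key
    _ = 2 * u ^ N / N.factorial := by ring

private lemma I_taylor (c : ℝ) (hc : 0 ≤ c) (N : ℕ) (hN : c ^ 2 ≤ N + 1) :
    |(∫ t in (0:ℝ)..c, Real.exp (-(t ^ 2 / 2))) -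
      ∑ m ∈ Finset.range N, (-1) ^ m * c ^ (2 * m + 1) / ((2 * m + 1) * 2 ^ m * m.factorial)| ≤
      2 * c ^ (2 * N + 1) / ((2 * N + 1) * 2 ^ N * N.factorial) := by
  have hcont : Continuous fun t : ℝ => Real.exp (-(t ^ 2 / 2)) := by continuity
  have hPcont : ∀ m : ℕ, Continuous fun t : ℝ => (-(t ^ 2 / 2)) ^ m / (m.factorial : ℝ) := by
    intro m; continuity
  -- integral of the polynomial
  have hP : (∫ t in (0:ℝ)..c, ∑ m ∈ Finset.range N, (-(t ^ 2 / 2)) ^ m / (m.factorial : ℝ))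
      = ∑ m ∈ Finset.range N, (-1) ^ m * c ^ (2 * m + 1) / ((2 * m + 1) * 2 ^ m * m.factorial) := by
    rw [intervalIntegral.integral_finset_sum
      (fun m _ => (hPcont m).intervalIntegrable 0 c)]
    refine Finset.sum_congr rfl fun m _ => ?_
    have hbody : ∀ t : ℝ, (-(t ^ 2 / 2)) ^ m / (m.factorial : ℝ)
        = ((-1 / 2) ^ m / (m.factorial : ℝ)) * t ^ (2 * m) := by
      intro t
      rw [pow_mul, show (-(t ^ 2 / 2)) = (-1 / 2) * t ^ 2 by ring, mul_pow]
      ring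
    simp_rw [hbody]
    rw [intervalIntegral.integral_const_mul, integral_pow, zero_pow (by omega)]
    have hm : ((-1 : ℝ) / 2) ^ m = (-1) ^ m / 2 ^ m := div_pow (-1) 2 m
    have hfac : (0:ℝ) < m.factorial := by positivity
    have h2m : (0:ℝ) < 2 * m + 1 := by positivity
    rw [hm]
    field_simp
    all_goals first
    | ring1
    | (ring_nf; simp; ring)
    | tauto
    | (ring_nf; simp)
  have hPint : IntervalIntegrable
      (fun t : ℝ => ∑ m ∈ Finset.range N, (-(t ^ 2 / 2)) ^ m / (m.factorial : ℝ)) volume 0 c :=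
    (continuous_finset_sum _ fun m _ => hPcont m).intervalIntegrable 0 c
  have hfint : IntervalIntegrable (fun t : ℝ => Real.exp (-(t ^ 2 / 2))) volume 0 c :=
    hcont.intervalIntegrable 0 c
  rw [← hP, ← intervalIntegral.integral_sub hfint hPint]
  -- bound the integral of the difference
  have hg : (∫ t in (0:ℝ)..c, 2 * (1 / 2) ^ N / (N.factorial : ℝ) * t ^ (2 * N))
      = 2 * c ^ (2 * N + 1) / ((2 * N + 1) * 2 ^ N * N.factorial) := by
    rw [intervalIntegral.integral_const_mul, integral_pow, zero_pow (by omega)]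
    have hfac : (0:ℝ) < N.factorial := by positivity
    have h2m : (0:ℝ) < 2 * N + 1 := by positivity
    rw [div_pow]
    field_simp
    all_goals first
    | ring1
    | (ring_nf; simp; ring)
    | tauto
    | (ring_nf; simp)
  have hbound : ∀ t ∈ Set.uIoc (0:ℝ) c,
      ‖Real.exp (-(t ^ 2 / 2)) - ∑ m ∈ Finset.range N, (-(t ^ 2 / 2)) ^ m / (m.factorial : ℝ)‖
        ≤ 2 * (1 / 2) ^ N / (N.factorial : ℝ) * t ^ (2 * N) := by
    intro t ht
    rw [Set.uIoc_of_le hc] at ht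
    have ht0 : 0 < t := ht.1
    have htc : t ≤ c := ht.2
    have h1 : 2 * (t ^ 2 / 2) ≤ N + 1 := by nlinarith
    have := exp_neg_taylor (t ^ 2 / 2) (by positivity) N h1
    calc ‖Real.exp (-(t ^ 2 / 2)) - ∑ m ∈ Finset.range N, (-(t ^ 2 / 2)) ^ m / (m.factorial : ℝ)‖
        ≤ 2 * (t ^ 2 / 2) ^ N / N.factorial := this
      _ = 2 * (1 / 2) ^ N / (N.factorial : ℝ) * t ^ (2 * N) := by
          rw [div_pow, pow_mul]
          have hfac : (0:ℝ) < N.factorial := by positivity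
          field_simp
          rw [← mul_pow]; norm_num
  rw [← Real.norm_eq_abs]
  calc ‖∫ t in (0:ℝ)..c, (Real.exp (-(t ^ 2 / 2))
          - ∑ m ∈ Finset.range N, (-(t ^ 2 / 2)) ^ m / (m.factorial : ℝ))‖
      ≤ |∫ t in (0:ℝ)..c, 2 * (1 / 2) ^ N / (N.factorial : ℝ) * t ^ (2 * N)| :=
        intervalIntegral.norm_integral_le_abs_of_norm_le
          (MeasureTheory.ae_restrict_of_forall_mem measurableSet_uIoc hbound)
          (((continuous_const.mul (continuous_pow (2 * N))).intervalIntegrable 0 c))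
    _ = 2 * c ^ (2 * N + 1) / ((2 * N + 1) * 2 ^ N * N.factorial) := by
        rw [hg, abs_of_nonneg (by positivity)]

private lemma stdNormalCDF_neg (c : ℝ) (hc : 0 ≤ c) :
    stdNormalCDF (-c) = (Real.sqrt (2 * Real.pi))⁻¹ *
      (Real.sqrt (2 * Real.pi) / 2 - ∫ t in (0:ℝ)..c, Real.exp (-(t ^ 2 / 2))) := by
  have hint : Integrable (fun x : ℝ => Real.exp (-(x ^ 2 / 2))) := by
    have h := integrable_exp_neg_mul_sq (b := (1/2 : ℝ)) (by norm_num)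
    have hb : (fun x : ℝ => Real.exp (-(1/2 : ℝ) * x ^ 2))
        = fun x : ℝ => Real.exp (-(x ^ 2 / 2)) := by
      funext x; congr 1; ring
    rwa [hb] at h
  have h2 : ∀ x : ℝ, gaussianPDFReal 0 1 x
      = (Real.sqrt (2 * Real.pi))⁻¹ * Real.exp (-(x ^ 2 / 2)) := by
    intro x
    simp only [gaussianPDFReal, NNReal.coe_one, mul_one, sub_zero]
    rw [neg_div]
  have h1 : stdNormalCDF (-c) = ∫ x in Set.Iic (-c), gaussianPDFReal 0 1 x := by
    rw [stdNormalCDF, gaussianReal_apply_eq_integral 0 one_ne_zero,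
      ENNReal.toReal_ofReal
        (setIntegral_nonneg measurableSet_Iic fun x _ => gaussianPDFReal_nonneg 0 1 x)]
  rw [h1]
  simp_rw [h2]
  rw [MeasureTheory.integral_const_mul]
  congr 1
  have hJ0 : (∫ x in Set.Iic (0:ℝ), Real.exp (-(x ^ 2 / 2))) = Real.sqrt (2 * Real.pi) / 2 := by
    have hsym := integral_comp_neg_Iic (0:ℝ)
      (fun x : ℝ => Real.exp (-(x ^ 2 / 2)))
    simp only [neg_zero, neg_sq] at hsym
    rw [hsym]
    have hgauss := integral_gaussian_Ioi (1/2 : ℝ)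
    simp_rw [show ∀ x : ℝ, -(1/2 : ℝ) * x ^ 2 = -(x ^ 2 / 2) from fun x => by ring] at hgauss
    rw [hgauss, show (Real.pi / (1/2 : ℝ)) = 2 * Real.pi by ring]
  have hsplit := intervalIntegral.integral_Iic_sub_Iic (μ := volume) (a := -c) (b := 0)
    hint.integrableOn hint.integrableOn
  have hflip : (∫ t in (-c)..(0:ℝ), Real.exp (-(t ^ 2 / 2)))
      = ∫ t in (0:ℝ)..c, Real.exp (-(t ^ 2 / 2)) := by
    have h := intervalIntegral.integral_comp_neg (a := (0:ℝ)) (b := c)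
      (f := fun t : ℝ => Real.exp (-(t ^ 2 / 2)))
    simp only [neg_sq, neg_zero] at h
    exact h.symm
  rw [hJ0, hflip] at hsplit
  linarith

/-- The adaptive-thresholding counterexample: with `σ = 2.54`, observed
threshold `5`, unobserved threshold `10`, and histogram values `1/10`
(observed) versus `0` (unobserved), the ratio of release probabilities
exceeds `651`. -/
theorem stmt6 :
    651 * stdNormalCDF (-10 / (127 / 50)) < stdNormalCDF ((1 / 10 - 5) / (127 / 50)) := by
  have e1 : (-10 / (127 / 50) : ℝ) = -(500 / 127) := by norm_num
  have e2 : ((1 / 10 - 5) / (127 / 50) : ℝ) = -(245 / 127) := by norm_num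
  rw [e1, e2, stdNormalCDF_neg (500/127) (by norm_num), stdNormalCDF_neg (245/127) (by norm_num)]
  have hY := I_taylor (500/127) (by norm_num) 38 (by norm_num)
  have hX := I_taylor (245/127) (by norm_num) 20 (by norm_num)
  rw [abs_sub_le_iff] at hY hX
  obtain ⟨hY1, hY2⟩ := hY
  obtain ⟨hX1, hX2⟩ := hX
  set s := Real.sqrt (2 * Real.pi) with hs
  have hspos : 0 < s := Real.sqrt_pos.mpr (by positivity)
  have hq : s < 2506628274631000503 / 1000000000000000000 := by
    rw [hs, Real.sqrt_lt' (by norm_num)]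
    nlinarith [Real.pi_lt_d20]
  set Iy := ∫ t in (0:ℝ)..(500/127), Real.exp (-(t ^ 2 / 2)) with hIy
  set Ix := ∫ t in (0:ℝ)..(245/127), Real.exp (-(t ^ 2 / 2)) with hIx
  norm_num [Finset.sum_range_succ, Nat.factorial] at hY1 hY2 hX1 hX2
  have key : 651 * (s / 2 - Iy) < s / 2 - Ix := by linarith
  calc 651 * (s⁻¹ * (s / 2 - Iy)) = s⁻¹ * (651 * (s / 2 - Iy)) := by ring
    _ < s⁻¹ * (s / 2 - Ix) := mul_lt_mul_of_pos_left key (inv_pos.mpr hspos)
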